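/- Let κ ∈ ℝ and T > 0. Let u : ℝ × ℝ → ℝ be three times continuously differentiable in the second variable with u_{xx} continuously differentiable in the first variable, and let ρ : ℝ × ℝ → ℝ be continuously differentiable; assume u and ρ are 1-periodic in the second variable. Set m := −u_{xx} and suppose that on [0, T) × ℝ: m_t + u·m_x + 2·u_x·m + κ·ρ·ρ_x = 0 and ρ_t + (ρ·u)_x = 0. Assume u(0, ·) and ρ(0, ·) are odd. Assume moreover the uniqueness property: for every pair (w, τ) with the same regularity and periodicity satisfying the same system on [0, T) × ℝ and with w(0, ·) = u(0, ·) and τ(0, ·) = ρ(0, ·), one has w = u and τ = ρ on [0, T) × ℝ. Then u(t, ·) and ρ(t, ·) are odd for every t ∈ [0, T). -/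

import Mathlib

/-- `HS2System κ T u ρ` expresses that the pair `(u, ρ)` satisfies the
two-component Hunter–Saxton system (with `a = 2`)
`m_t + u m_x + 2 u_x m + κ ρ ρ_x = 0`, `m = −u_xx`, `ρ_t + (ρ u)_x = 0`
at every point of `[0, T) × ℝ`. -/
def HS2System (κ T : ℝ) (u ρ : ℝ → ℝ → ℝ) : Prop :=
  ∀ t ∈ Set.Ico (0 : ℝ) T, ∀ x : ℝ,
    (deriv (fun s => -(deriv (deriv (fun y => u s y)) x)) t
      + u t x * deriv (fun y => -(deriv (deriv (fun z => u t z)) y)) x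
      + 2 * deriv (fun y => u t y) x * (-(deriv (deriv (fun y => u t y)) x))
      + κ * ρ t x * deriv (fun y => ρ t y) x = 0)
    ∧ (deriv (fun s => ρ s x) t + deriv (fun y => ρ t y * u t y) x = 0)

/-- `HS2Regular u ρ` records the regularity assumptions: `u` is `C³` in the
second variable with `u_xx` being `C¹` in the first variable, and `ρ` is `C¹`. -/
def HS2Regular (u ρ : ℝ → ℝ → ℝ) : Prop :=
  (∀ t : ℝ, ContDiff ℝ 3 (fun x => u t x)) ∧
  (∀ x : ℝ, ContDiff ℝ 1 (fun t => deriv (deriv (fun y => u t y)) x)) ∧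
  ContDiff ℝ 1 (Function.uncurry ρ)

/-- `SpacePeriodic u ρ` records that `u` and `ρ` are `1`-periodic in the
second variable. -/
def SpacePeriodic (u ρ : ℝ → ℝ → ℝ) : Prop :=
  (∀ t x : ℝ, u t (x + 1) = u t x) ∧ (∀ t x : ℝ, ρ t (x + 1) = ρ t x)

lemma negcomp_deriv (f : ℝ → ℝ) (x : ℝ) :
    deriv (fun y => -f (-y)) x = deriv f (-x) := by
  have : (fun y : ℝ => -f (-y)) = fun y => -((fun z => f (-z)) y) := rfl
  rw [this, deriv.fun_neg, deriv_comp_neg, neg_neg]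

lemma negcomp_deriv2 (f : ℝ → ℝ) (x : ℝ) :
    deriv (deriv (fun y => -f (-y))) x = -deriv (deriv f) (-x) := by
  have h : deriv (fun y : ℝ => -f (-y)) = fun y => deriv f (-y) := by
    funext y; exact negcomp_deriv f y
  rw [h, deriv_comp_neg]

/-- **Odd initial data produce odd solutions of the two-component
Hunter–Saxton system.** Let `κ ∈ ℝ`, `T > 0`. Suppose `(u, ρ)` is regular,
spatially `1`-periodic, satisfies the two-component Hunter–Saxton system on
`[0, T) × ℝ`, and `u(0, ·)`, `ρ(0, ·)` are odd. If the solution with these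
initial values is unique among regular spatially `1`-periodic solutions, then
`u(t, ·)` and `ρ(t, ·)` are odd for every `t ∈ [0, T)`. -/
theorem two_component_hunter_saxton_odd_solution
    (κ T : ℝ) (hT : 0 < T) (u ρ : ℝ → ℝ → ℝ)
    (hreg : HS2Regular u ρ) (hper : SpacePeriodic u ρ)
    (hsys : HS2System κ T u ρ)
    (hu0 : ∀ x : ℝ, u 0 (-x) = -u 0 x)
    (hρ0 : ∀ x : ℝ, ρ 0 (-x) = -ρ 0 x)
    (huniq : ∀ w τ : ℝ → ℝ → ℝ, HS2Regular w τ → SpacePeriodic w τ →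
      HS2System κ T w τ →
      (∀ x : ℝ, w 0 x = u 0 x) → (∀ x : ℝ, τ 0 x = ρ 0 x) →
      ∀ t ∈ Set.Ico (0 : ℝ) T, ∀ x : ℝ, w t x = u t x ∧ τ t x = ρ t x) :
    ∀ t ∈ Set.Ico (0 : ℝ) T, ∀ x : ℝ,
      u t (-x) = -u t x ∧ ρ t (-x) = -ρ t x := by
  obtain ⟨hu3, hutx, hρc⟩ := hreg
  set w : ℝ → ℝ → ℝ := fun t x => -u t (-x) with hw
  set τ : ℝ → ℝ → ℝ := fun t x => -ρ t (-x) with hτ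
  -- second spatial derivative of w
  have hd2 : ∀ t x : ℝ, deriv (deriv (fun y => w t y)) x
      = -deriv (deriv (fun y => u t y)) (-x) := fun t x => negcomp_deriv2 _ x
  have hreg' : HS2Regular w τ := by
    refine ⟨fun t => ((hu3 t).comp contDiff_neg).neg, fun x => ?_, ?_⟩
    · have : (fun t => deriv (deriv (fun y => w t y)) x)
          = fun t => -deriv (deriv (fun y => u t y)) (-x) := by
        funext t; exact hd2 t x
      rw [this]; exact (hutx (-x)).neg
    · have : Function.uncurry τ
          = fun p : ℝ × ℝ => -(Function.uncurry ρ (p.1, -p.2)) := rfl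
      rw [this]
      exact (hρc.comp (contDiff_fst.prodMk contDiff_snd.neg)).neg
  have hper' : SpacePeriodic w τ := by
    constructor <;> intro t x <;> simp only [hw, hτ, neg_add]
    · rw [show -x + -1 = (-x - 1) by ring, ← hper.1 t (-x - 1)]; ring_nf
    · rw [show -x + -1 = (-x - 1) by ring, ← hper.2 t (-x - 1)]; ring_nf
  have hsys' : HS2System κ T w τ := by
    intro t ht x
    obtain ⟨h1, h2⟩ := hsys t ht (-x)
    constructor
    · -- transform each term
      have e1 : (fun s => -(deriv (deriv (fun y => w s y)) x))
          = fun s => deriv (deriv (fun y => u s y)) (-x) := by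
        funext s; rw [hd2 s x, neg_neg]
      have e2 : (fun y => -(deriv (deriv (fun z => w t z)) y))
          = fun y => (fun z => deriv (deriv (fun y' => u t y')) z) (-y) := by
        funext y; rw [hd2 t y, neg_neg]
      have e3 : deriv (fun y => w t y) x = deriv (fun y => u t y) (-x) :=
        negcomp_deriv _ x
      rw [e1, e2, deriv_comp_neg (fun z : ℝ => deriv (deriv (fun y : ℝ => u t y)) z) x, e3, hd2 t x]
      have e4 : deriv (fun s => -(deriv (deriv (fun y => u s y)) (-x))) t
          = -deriv (fun s => deriv (deriv (fun y => u s y)) (-x)) t := deriv.neg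
      rw [e4] at h1
      have e5 : (fun y => -(deriv (deriv (fun z => u t z)) y))
          = fun y => -((fun z => deriv (deriv (fun y' => u t y')) z) y) := rfl
      rw [e5, deriv.fun_neg] at h1
      have e6 : deriv (fun y => τ t y) x = deriv (fun y => ρ t y) (-x) :=
        negcomp_deriv _ x
      rw [e6]
      simp only [hw, hτ]
      nlinarith [h1]
    · have e1 : (fun s => τ s x) = fun s => -((fun s' => ρ s' (-x)) s) := rfl
      have e2 : (fun y => τ t y * w t y)
          = fun y => (fun z => ρ t z * u t z) (-y) := by
        funext y; simp only [hw, hτ]; ring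
      rw [e1, deriv.fun_neg, e2, deriv_comp_neg (fun z : ℝ => ρ t z * u t z) x]
      linarith [h2]
  have h0w : ∀ x : ℝ, w 0 x = u 0 x := by
    intro x; simp only [hw, hu0, neg_neg]
  have h0τ : ∀ x : ℝ, τ 0 x = ρ 0 x := by
    intro x; simp only [hτ, hρ0, neg_neg]
  intro t ht x
  obtain ⟨hwu, hτρ⟩ := huniq w τ hreg' hper' hsys' h0w h0τ t ht x
  constructor <;> [skip; skip]
  · have := hwu; simp only [hw] at this; linarith
  · have := hτρ; simp only [hτ] at this; linarith
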